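/- (Equivalent systems of inequalities.) Let a = (a_1,…,a_n) with all a_i > 0, n ≥ 4, and let L_1,…,L_{n-1} ≥ 0 satisfy L_1 = a_1 and L_{n-1} = a_n. Then the following two systems are equivalent: (I) |L_k − a_k| ≤ L_{k-1} ≤ L_k + a_k for 3 ≤ k ≤ n−1, and max(0, R_k^min) ≤ L_k ≤ R_k^max for 2 ≤ k ≤ n−1; (II) |L_{k-1} − a_k| ≤ L_k ≤ L_{k-1} + a_k for 2 ≤ k ≤ n−1, and a_k ≤ L_k + L_{k-1} for 2 ≤ k ≤ n−1. -/
import Mathlib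


/-- `R_k^min = max_{1 ≤ i ≤ k} (2 a_i − Σ_{j=1}^k a_j)`. -/
noncomputable def Rmin (a : ℕ → ℝ) (k : ℕ) : ℝ :=
  sSup ((fun i => 2 * a i - ∑ j ∈ Finset.Icc 1 k, a j) '' Set.Icc 1 k)

/-- `R_k^max = Σ_{j=1}^k a_j`. -/
noncomputable def Rmax (a : ℕ → ℝ) (k : ℕ) : ℝ :=
  ∑ j ∈ Finset.Icc 1 k, a j

lemma le_Rmin (a : ℕ → ℝ) {i k : ℕ} (h1 : 1 ≤ i) (h2 : i ≤ k) :
    2 * a i - Rmax a k ≤ Rmin a k := by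
  unfold Rmin Rmax
  exact le_csSup ((Set.finite_Icc 1 k).image _).bddAbove ⟨i, ⟨h1, h2⟩, rfl⟩

lemma Rmin_le (a : ℕ → ℝ) {k : ℕ} (hk : 1 ≤ k) {x : ℝ}
    (h : ∀ i, 1 ≤ i → i ≤ k → 2 * a i - Rmax a k ≤ x) : Rmin a k ≤ x := by
  unfold Rmin
  apply csSup_le (((Set.nonempty_Icc).2 hk).image _)
  rintro y ⟨i, ⟨h1, h2⟩, rfl⟩
  exact h i h1 h2

lemma Rmax_succ (a : ℕ → ℝ) (k : ℕ) : Rmax a (k + 1) = Rmax a k + a (k + 1) :=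
  Finset.sum_Icc_succ_top (by omega) a

lemma Rmax_one (a : ℕ → ℝ) : Rmax a 1 = a 1 := by
  simp [Rmax]

lemma Rmax_two (a : ℕ → ℝ) : Rmax a 2 = a 1 + a 2 := by
  have := Rmax_succ a 1
  rw [Rmax_one] at this
  exact this

/-- Equivalence of the two systems of inequalities for the diagonal lengths of a closed
kinematic chain: with `L_1 = a_1`, `L_{n-1} = a_n` and `L_k ≥ 0`, system (I)
(`|L_k − a_k| ≤ L_{k-1} ≤ L_k + a_k` for `3 ≤ k ≤ n−1`, and
`max(0, R_k^min) ≤ L_k ≤ R_k^max` for `2 ≤ k ≤ n−1`) holds if and only if system (II)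
(`|L_{k-1} − a_k| ≤ L_k ≤ L_{k-1} + a_k` and `a_k ≤ L_k + L_{k-1}` for `2 ≤ k ≤ n−1`)
holds. -/
theorem systems_equivalent
    (n : ℕ) (hn : 4 ≤ n) (a : ℕ → ℝ) (ha : ∀ i, 1 ≤ i → i ≤ n → 0 < a i)
    (L : ℕ → ℝ) (hL0 : ∀ k, 1 ≤ k → k ≤ n - 1 → 0 ≤ L k)
    (hL1 : L 1 = a 1) (hLn : L (n - 1) = a n) :
    ((∀ k, 3 ≤ k → k ≤ n - 1 → |L k - a k| ≤ L (k - 1) ∧ L (k - 1) ≤ L k + a k) ∧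
      (∀ k, 2 ≤ k → k ≤ n - 1 → max 0 (Rmin a k) ≤ L k ∧ L k ≤ Rmax a k)) ↔
    (∀ k, 2 ≤ k → k ≤ n - 1 →
      |L (k - 1) - a k| ≤ L k ∧ L k ≤ L (k - 1) + a k ∧ a k ≤ L k + L (k - 1)) := by
  constructor
  · rintro ⟨hT, hB⟩ k hk2 hkn
    rcases eq_or_lt_of_le hk2 with hk | hk
    · -- k = 2
      subst hk
      obtain ⟨hlo, hhi⟩ := hB 2 le_rfl (by omega)
      rw [Rmax_two] at hhi
      have h1 : a 1 - a 2 ≤ L 2 := by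
        have := le_Rmin a (le_refl 1) (by norm_num : (1:ℕ) ≤ 2)
        rw [Rmax_two] at this
        have h2 := le_trans (le_max_right 0 (Rmin a 2)) hlo
        linarith
      have h2 : a 2 - a 1 ≤ L 2 := by
        have := le_Rmin a (by norm_num : (1:ℕ) ≤ 2) (le_refl 2)
        rw [Rmax_two] at this
        have h2 := le_trans (le_max_right 0 (Rmin a 2)) hlo
        linarith
      norm_num [hL1]
      refine ⟨abs_le.2 ⟨by linarith, by linarith⟩, by linarith, by linarith⟩
    · -- 3 ≤ k
      obtain ⟨h1, h2⟩ := hT k (by omega) hkn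
      rw [abs_le] at h1
      exact ⟨abs_le.2 ⟨by linarith, by linarith⟩, by linarith, by linarith⟩
  · intro hII
    have hB1 : ∀ k, 1 ≤ k → k ≤ n - 1 → L k ≤ Rmax a k := by
      intro k hk
      induction k, hk using Nat.le_induction with
      | base => intro _; rw [Rmax_one, hL1]
      | succ m hm ih =>
        intro hmn
        have ih' := ih (by omega)
        obtain ⟨_, h2, _⟩ := hII (m + 1) (by omega) hmn
        simp only [Nat.add_sub_cancel] at h2
        rw [Rmax_succ]
        linarith
    have hB2 : ∀ i, 1 ≤ i → ∀ k, i ≤ k → k ≤ n - 1 → 2 * a i - Rmax a k ≤ L k := by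
      intro i hi k hik
      induction k, hik using Nat.le_induction with
      | base =>
        intro hin
        rcases eq_or_lt_of_le hi with h1 | h2
        · subst h1
          rw [Rmax_one, hL1]
          linarith
        · obtain ⟨_, _, h3⟩ := hII i (by omega) hin
          have hb := hB1 (i - 1) (by omega) (by omega)
          have hs := Rmax_succ a (i - 1)
          rw [show i - 1 + 1 = i by omega] at hs
          linarith
      | succ m hm ih =>
        intro hmn
        have ih' := ih (by omega)
        obtain ⟨h1, _, _⟩ := hII (m + 1) (by omega) hmn
        simp only [Nat.add_sub_cancel] at h1
        rw [abs_le] at h1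
        rw [Rmax_succ]
        linarith [h1.2]
    constructor
    · intro k hk3 hkn
      obtain ⟨h1, h2, h3⟩ := hII k (by omega) hkn
      rw [abs_le] at h1
      exact ⟨abs_le.2 ⟨by linarith, by linarith⟩, by linarith⟩
    · intro k hk2 hkn
      exact ⟨max_le (hL0 k (by omega) hkn)
          (Rmin_le a (by omega) fun i h1 h2 => hB2 i h1 k h2 hkn),
        hB1 k (by omega) hkn⟩
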